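/- If a primitive event (X,w) = x is part of a cause of an event α in a recursive causal Kripke setting (K,t) at a world w' according to the MODIFIED HP definition of actual causality, then (X,w) = x is part of a cause of α in (K,t) at w' according to the UPDATED HP definition. -/

import Mathlib

open Classical

noncomputable section

/-- A causal Kripke model `K = (S, W, Rel, F)`: the signature `S` consists of the disjoint
finite sets `Exo` of exogenous and `Endo` of endogenous variables together with a finite
nonempty range `range Γ w` of possible values for each variable `Γ` at each world `w`;
`World` is a finite set of possible worlds, `Rel` is the accessibility relation, and `eqs`
assigns to each endogenous variable `X` and world `w` a structural equation computing the
value of `(X,w)` from the values of all the other variables (it does not depend on the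
coordinate `(X,w)` itself, and its value lies in the range of `(X,w)`). -/
structure CKM where
  Exo : Type
  Endo : Type
  World : Type
  Val : Type
  exoFin : Fintype Exo
  endoFin : Fintype Endo
  worldFin : Fintype World
  Rel : World → World → Prop
  range : (Exo ⊕ Endo) → World → Finset Val
  range_nonempty : ∀ Γ w, (range Γ w).Nonempty
  eqs : Endo → World → (((Exo ⊕ Endo) × World) → Val) → Val
  eqs_mem : ∀ X w g, eqs X w g ∈ range (Sum.inr X) w
  eqs_indep : ∀ X w g g',
    (∀ p, p ≠ (Sum.inr X, w) → g p = g' p) → eqs X w g = eqs X w g'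

namespace CKM

/-- A context assigns to every exogenous variable at every world a value in its range. -/
def ValidContext (K : CKM) (t : K.Exo → K.World → K.Val) : Prop :=
  ∀ U w, t U w ∈ K.range (Sum.inl U) w

/-- `v` is a solution of the causal Kripke setting `(K, t)`: it agrees with the context `t`
on all exogenous variables and satisfies all structural equations. -/
def Solves (K : CKM) (t : K.Exo → K.World → K.Val)
    (v : ((K.Exo ⊕ K.Endo) × K.World) → K.Val) : Prop :=
  (∀ U w, v (Sum.inl U, w) = t U w) ∧ ∀ X w, v (Sum.inr X, w) = K.eqs X w v

/-- The variable `p` influences the (endogenous) variable `q` (i.e. `q` directly causally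
depends on `p`): some change in the value of `p`, keeping all other variables fixed
(within their ranges), changes the value of the structural equation of `q`. -/
def Influences (K : CKM) (p q : (K.Exo ⊕ K.Endo) × K.World) : Prop :=
  ∃ X w, q = (Sum.inr X, w) ∧
    ∃ g g', (∀ r, g r ∈ K.range r.1 r.2) ∧ (∀ r, g' r ∈ K.range r.1 r.2) ∧
      (∀ r, r ≠ p → g r = g' r) ∧ K.eqs X w g ≠ K.eqs X w g'

/-- A causal Kripke model is recursive if it contains no cyclic dependencies. -/
def Recursive (K : CKM) : Prop :=
  ∀ p, ¬ Relation.TransGen K.Influences p p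

/-- The causal Kripke model obtained from `K` by the intervention setting the variables in
`dom` to the values prescribed by `val`. -/
def doInt (K : CKM) (dom : Finset (K.Endo × K.World)) (val : K.Endo × K.World → K.Val) :
    CKM :=
  { K with
    eqs := fun X w g =>
      if (X, w) ∈ dom ∧ val (X, w) ∈ K.range (Sum.inr X) w then val (X, w)
      else K.eqs X w g
    eqs_mem := by
      intro X w g
      by_cases h : (X, w) ∈ dom ∧ val (X, w) ∈ K.range (Sum.inr X) w
      · simp only [if_pos h]; exact h.2
      · simp only [if_neg h]; exact K.eqs_mem X w g
    eqs_indep := by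
      intro X w g g' hgg'
      by_cases h : (X, w) ∈ dom ∧ val (X, w) ∈ K.range (Sum.inr X) w
      · simp only [if_pos h]
      · simp only [if_neg h]; exact K.eqs_indep X w g g' hgg' }

end CKM

/-- Events (modal-Boolean combinations of primitive events): primitive events `X = x` and
`(X,w) = x`, negation, conjunction and the modal operator `□`. -/
inductive Event (E W V : Type) : Type
  | eq : E → V → Event E W V
  | eqAt : E → W → V → Event E W V
  | neg : Event E W V → Event E W V
  | conj : Event E W V → Event E W V → Event E W V
  | box : Event E W V → Event E W V

namespace CKM

/-- Satisfaction of an event at a world of `K`, relative to a solution `v` of the setting. -/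
def SatE (K : CKM) (v : ((K.Exo ⊕ K.Endo) × K.World) → K.Val) :
    K.World → Event K.Endo K.World K.Val → Prop
  | w, .eq X x => v (Sum.inr X, w) = x
  | _, .eqAt X w' x => v (Sum.inr X, w') = x
  | w, .neg α => ¬ SatE K v w α
  | w, .conj α β => SatE K v w α ∧ SatE K v w β
  | w, .box α => ∀ w', K.Rel w w' → SatE K v w' α

/-- `(K,t,w) ⊩ [dom ← val] α` : the event `α` holds at `w` in the model obtained from the
intervention `dom ← val`, in the context `t`. -/
def SatI (K : CKM) (t : K.Exo → K.World → K.Val) (dom : Finset (K.Endo × K.World))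
    (val : K.Endo × K.World → K.Val) (w : K.World) (α : Event K.Endo K.World K.Val) :
    Prop :=
  ∀ v, (K.doInt dom val).Solves t v → (K.doInt dom val).SatE v w α

/-- AC1 : `α` actually holds at `w`, and each conjunct `(X_i, w_j) = y_ij` of `Y = y`
actually holds. -/
def AC1 (K : CKM) (t : K.Exo → K.World → K.Val) (w : K.World)
    (Y : Finset (K.Endo × K.World)) (y : K.Endo × K.World → K.Val)
    (α : Event K.Endo K.World K.Val) : Prop :=
  ∀ v, K.Solves t v → K.SatE v w α ∧ ∀ p ∈ Y, v (Sum.inr p.1, p.2) = y p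

/-- AC2a together with AC2bᵒ (they share the partition `Z`, `N` and the setting `n`):
there is a partition of the endogenous variables into `Z ⊇ Y` and `N` and settings `y'`
of `Y` and `n` of `N` such that `(K,t,w) ⊩ [Y ← y', N ← n] ¬α`, and, where `z*` are the
actual values of the variables of `Z`, for every subset `Z'` of `Z \ Y`,
`(K,t,w) ⊩ [Y ← y, N ← n, Z' ← z'*] α`. -/
def AC2o (K : CKM) (t : K.Exo → K.World → K.Val) (w : K.World)
    (Y : Finset (K.Endo × K.World)) (y : K.Endo × K.World → K.Val)
    (α : Event K.Endo K.World K.Val) : Prop :=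
  ∃ Z N : Finset (K.Endo × K.World), ∃ y' n : K.Endo × K.World → K.Val,
    Y ⊆ Z ∧ Disjoint Z N ∧ (∀ p : K.Endo × K.World, p ∈ Z ∨ p ∈ N) ∧
    (∀ p ∈ Y, y' p ∈ K.range (Sum.inr p.1) p.2) ∧
    (∀ p ∈ N, n p ∈ K.range (Sum.inr p.1) p.2) ∧
    K.SatI t (Y ∪ N) (fun p => if p ∈ Y then y' p else n p) w (.neg α) ∧
    ∀ v, K.Solves t v → ∀ Z' ⊆ Z \ Y,
      K.SatI t (Y ∪ N ∪ Z')
        (fun p => if p ∈ Y then y p else if p ∈ N then n p else v (Sum.inr p.1, p.2)) w α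

/-- AC2a together with AC2bᵘ (updated definition): as in `AC2o`, but moreover the
restoration of the actual values `z'*` must keep `α` true for every subset `N'` of `N`. -/
def AC2u (K : CKM) (t : K.Exo → K.World → K.Val) (w : K.World)
    (Y : Finset (K.Endo × K.World)) (y : K.Endo × K.World → K.Val)
    (α : Event K.Endo K.World K.Val) : Prop :=
  ∃ Z N : Finset (K.Endo × K.World), ∃ y' n : K.Endo × K.World → K.Val,
    Y ⊆ Z ∧ Disjoint Z N ∧ (∀ p : K.Endo × K.World, p ∈ Z ∨ p ∈ N) ∧
    (∀ p ∈ Y, y' p ∈ K.range (Sum.inr p.1) p.2) ∧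
    (∀ p ∈ N, n p ∈ K.range (Sum.inr p.1) p.2) ∧
    K.SatI t (Y ∪ N) (fun p => if p ∈ Y then y' p else n p) w (.neg α) ∧
    ∀ v, K.Solves t v → ∀ Z' ⊆ Z \ Y, ∀ N' ⊆ N,
      K.SatI t (Y ∪ N' ∪ Z')
        (fun p => if p ∈ Y then y p else if p ∈ N' then n p else v (Sum.inr p.1, p.2)) w α

/-- AC2aᵐ (modified definition): there are a set `N` of endogenous variables and a setting
`y'` of the variables in `Y` such that, where `n*` are the actual values of the variables
in `N`, `(K,t,w) ⊩ [Y ← y', N ← n*] ¬α`. -/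
def AC2m (K : CKM) (t : K.Exo → K.World → K.Val) (w : K.World)
    (Y : Finset (K.Endo × K.World)) (y : K.Endo × K.World → K.Val)
    (α : Event K.Endo K.World K.Val) : Prop :=
  ∃ N : Finset (K.Endo × K.World), ∃ y' : K.Endo × K.World → K.Val,
    (∀ p ∈ Y, y' p ∈ K.range (Sum.inr p.1) p.2) ∧
    ∀ v, K.Solves t v →
      K.SatI t (Y ∪ N)
        (fun p => if p ∈ Y then y' p else v (Sum.inr p.1, p.2)) w (.neg α)

/-- `Y = y` is an actual cause of `α` in `(K,t)` at `w` by the ORIGINAL HP definition. -/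
def IsCauseO (K : CKM) (t : K.Exo → K.World → K.Val) (w : K.World)
    (Y : Finset (K.Endo × K.World)) (y : K.Endo × K.World → K.Val)
    (α : Event K.Endo K.World K.Val) : Prop :=
  K.AC1 t w Y y α ∧ K.AC2o t w Y y α ∧
    ∀ Y' ⊂ Y, ∀ y'' : K.Endo × K.World → K.Val,
      ¬ (K.AC1 t w Y' y'' α ∧ K.AC2o t w Y' y'' α)

/-- `Y = y` is an actual cause of `α` in `(K,t)` at `w` by the UPDATED HP definition. -/
def IsCauseU (K : CKM) (t : K.Exo → K.World → K.Val) (w : K.World)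
    (Y : Finset (K.Endo × K.World)) (y : K.Endo × K.World → K.Val)
    (α : Event K.Endo K.World K.Val) : Prop :=
  K.AC1 t w Y y α ∧ K.AC2u t w Y y α ∧
    ∀ Y' ⊂ Y, ∀ y'' : K.Endo × K.World → K.Val,
      ¬ (K.AC1 t w Y' y'' α ∧ K.AC2u t w Y' y'' α)

/-- `Y = y` is an actual cause of `α` in `(K,t)` at `w` by the MODIFIED HP definition. -/
def IsCauseM (K : CKM) (t : K.Exo → K.World → K.Val) (w : K.World)
    (Y : Finset (K.Endo × K.World)) (y : K.Endo × K.World → K.Val)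
    (α : Event K.Endo K.World K.Val) : Prop :=
  K.AC1 t w Y y α ∧ K.AC2m t w Y y α ∧
    ∀ Y' ⊂ Y, ∀ y'' : K.Endo × K.World → K.Val,
      ¬ (K.AC1 t w Y' y'' α ∧ K.AC2m t w Y' y'' α)

/-- `(X,w) = x` is part of a cause of `α` in `(K,t)` at `w'` by the original HP
definition: it is a conjunct of some actual cause `Y = y` of `α` at `w'`. -/
def PartOfCauseO (K : CKM) (t : K.Exo → K.World → K.Val) (w' : K.World)
    (X : K.Endo) (w : K.World) (x : K.Val) (α : Event K.Endo K.World K.Val) : Prop :=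
  ∃ Y y, K.IsCauseO t w' Y y α ∧ (X, w) ∈ Y ∧ y (X, w) = x

/-- `(X,w) = x` is part of a cause of `α` in `(K,t)` at `w'` by the updated HP
definition. -/
def PartOfCauseU (K : CKM) (t : K.Exo → K.World → K.Val) (w' : K.World)
    (X : K.Endo) (w : K.World) (x : K.Val) (α : Event K.Endo K.World K.Val) : Prop :=
  ∃ Y y, K.IsCauseU t w' Y y α ∧ (X, w) ∈ Y ∧ y (X, w) = x

/-- `(X,w) = x` is part of a cause of `α` in `(K,t)` at `w'` by the modified HP
definition. -/
def PartOfCauseM (K : CKM) (t : K.Exo → K.World → K.Val) (w' : K.World)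
    (X : K.Endo) (w : K.World) (x : K.Val) (α : Event K.Endo K.World K.Val) : Prop :=
  ∃ Y y, K.IsCauseM t w' Y y α ∧ (X, w) ∈ Y ∧ y (X, w) = x

end CKM


namespace CKM

variable (K : CKM)

noncomputable def varFin (K : CKM) : Fintype ((K.Exo ⊕ K.Endo) × K.World) := by
  letI := K.exoFin; letI := K.endoFin; letI := K.worldFin; infer_instance

/-- The structural equation of `(X,w)` depends only on the influencers of `(X,w)`,
as long as both assignments take values in the ranges. -/
lemma eqs_eq_of_agree (X : K.Endo) (w : K.World)
    (g g' : ((K.Exo ⊕ K.Endo) × K.World) → K.Val)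
    (hg : ∀ r, g r ∈ K.range r.1 r.2) (hg' : ∀ r, g' r ∈ K.range r.1 r.2)
    (hagree : ∀ q, K.Influences q (Sum.inr X, w) → g q = g' q) :
    K.eqs X w g = K.eqs X w g' := by
  classical
  letI := K.varFin
  suffices H : ∀ (s : Finset ((K.Exo ⊕ K.Endo) × K.World)) g,
      (∀ r, g r ∈ K.range r.1 r.2) →
      (∀ q, K.Influences q (Sum.inr X, w) → g q = g' q) →
      (∀ r, g r ≠ g' r → r ∈ s) → K.eqs X w g = K.eqs X w g' by
    exact H Finset.univ g hg hagree (fun r _ => Finset.mem_univ r)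
  intro s
  induction s using Finset.strongInduction with
  | _ s ih =>
    intro g hg hag hs
    by_cases hd : ∀ r, g r = g' r
    · exact congrArg _ (funext hd)
    · push_neg at hd
      obtain ⟨r₀, hr₀⟩ := hd
      have hr₀s : r₀ ∈ s := hs r₀ hr₀
      set g₂ := Function.update g r₀ (g' r₀) with hg₂def
      have hg₂ : ∀ r, g₂ r ∈ K.range r.1 r.2 := by
        intro r
        by_cases hr : r = r₀
        · subst hr; simp [hg₂def, Function.update_self]; exact hg' r
        · simp [hg₂def, Function.update_of_ne hr]; exact hg r
      have step : K.eqs X w g = K.eqs X w g₂ := by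
        by_contra hne
        have hinf : K.Influences r₀ (Sum.inr X, w) :=
          ⟨X, w, rfl, g, g₂, hg, hg₂,
            fun r hr => (Function.update_of_ne hr _ _).symm, hne⟩
        exact hr₀ (hag r₀ hinf)
      rw [step]
      refine ih (s.erase r₀) (Finset.erase_ssubset hr₀s) g₂ hg₂ ?_ ?_
      · intro q hq
        by_cases hqr : q = r₀
        · subst hqr; simp [hg₂def, Function.update_self]
        · simp [hg₂def, Function.update_of_ne hqr]; exact hag q hq
      · intro r hr
        have hrr₀ : r ≠ r₀ := by
          intro h; subst h; simp [hg₂def, Function.update_self] at hr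
        refine Finset.mem_erase.2 ⟨hrr₀, hs r ?_⟩
        simpa [hg₂def, Function.update_of_ne hrr₀] using hr

lemma recursive_wf (hK : K.Recursive) :
    WellFounded (Relation.TransGen K.Influences) := by
  letI := K.varFin
  letI : IsTrans ((K.Exo ⊕ K.Endo) × K.World) (Relation.TransGen K.Influences) :=
    ⟨fun _ _ _ hab hbc => hab.trans hbc⟩
  letI : IsIrrefl ((K.Exo ⊕ K.Endo) × K.World) (Relation.TransGen K.Influences) :=
    ⟨hK⟩
  exact Finite.wellFounded_of_trans_of_irrefl _

lemma solves_mem {t : K.Exo → K.World → K.Val} (ht : K.ValidContext t)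
    {v} (hv : K.Solves t v) : ∀ r, v r ∈ K.range r.1 r.2 := by
  rintro ⟨s, w⟩
  cases s with
  | inl U => rw [hv.1]; exact ht U w
  | inr X => rw [hv.2]; exact K.eqs_mem X w v

noncomputable def sol (hwf : WellFounded (Relation.TransGen K.Influences))
    (t : K.Exo → K.World → K.Val) : ((K.Exo ⊕ K.Endo) × K.World) → K.Val :=
  WellFounded.fix hwf (fun p rec =>
    match p.1 with
    | Sum.inl U => t U p.2
    | Sum.inr X => K.eqs X p.2 (fun q =>
        if h : Relation.TransGen K.Influences q p then rec q h
        else (K.range_nonempty q.1 q.2).choose))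

lemma sol_exo (hwf) (t : K.Exo → K.World → K.Val) (U : K.Exo) (w : K.World) :
    K.sol hwf t (Sum.inl U, w) = t U w := by
  rw [sol, WellFounded.fix_eq]

lemma sol_endo (hwf) (t : K.Exo → K.World → K.Val) (X : K.Endo) (w : K.World) :
    K.sol hwf t (Sum.inr X, w) = K.eqs X w (fun q =>
      if Relation.TransGen K.Influences q (Sum.inr X, w) then K.sol hwf t q
      else (K.range_nonempty q.1 q.2).choose) := by
  rw [sol, WellFounded.fix_eq]
  simp only []
  rfl

lemma sol_mem (hwf) {t : K.Exo → K.World → K.Val} (ht : K.ValidContext t) :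
    ∀ r, K.sol hwf t r ∈ K.range r.1 r.2 := by
  rintro ⟨s, w⟩
  cases s with
  | inl U => rw [sol_exo]; exact ht U w
  | inr X => rw [sol_endo]; exact K.eqs_mem X w _

lemma sol_solves (hwf) {t : K.Exo → K.World → K.Val} (ht : K.ValidContext t) :
    K.Solves t (K.sol hwf t) := by
  refine ⟨fun U w => K.sol_exo hwf t U w, fun X w => ?_⟩
  rw [sol_endo]
  refine K.eqs_eq_of_agree X w _ _ ?_ (K.sol_mem hwf ht) ?_
  · intro r
    by_cases h : Relation.TransGen K.Influences r (Sum.inr X, w)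
    · simp only [if_pos h]; exact K.sol_mem hwf ht r
    · simp only [if_neg h]; exact (K.range_nonempty r.1 r.2).choose_spec
  · intro q hq
    simp only [if_pos (Relation.TransGen.single hq)]

lemma solves_unique (hwf : WellFounded (Relation.TransGen K.Influences))
    {t : K.Exo → K.World → K.Val} (ht : K.ValidContext t)
    {v v'} (h : K.Solves t v) (h' : K.Solves t v') : v = v' := by
  funext p
  refine hwf.induction (C := fun p => v p = v' p) p ?_
  rintro ⟨s, w⟩ ih
  cases s with
  | inl U => rw [h.1, h'.1]
  | inr X =>
    rw [h.2, h'.2]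
    exact K.eqs_eq_of_agree X w _ _ (K.solves_mem ht h) (K.solves_mem ht h')
      (fun q hq => ih q (Relation.TransGen.single hq))

lemma exists_solves (hK : K.Recursive) {t : K.Exo → K.World → K.Val}
    (ht : K.ValidContext t) : ∃ v, K.Solves t v :=
  ⟨K.sol (K.recursive_wf hK) t, K.sol_solves _ ht⟩

lemma doInt_influences {dom val} {p q} (h : (K.doInt dom val).Influences p q) :
    K.Influences p q := by
  obtain ⟨X, w, rfl, g, g', hg, hg', hagree, hne⟩ := h
  by_cases hc : (X, w) ∈ dom ∧ val (X, w) ∈ K.range (Sum.inr X) w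
  · exfalso
    apply hne
    rw [show (K.doInt dom val).eqs X w g = val (X, w) from if_pos hc,
      show (K.doInt dom val).eqs X w g' = val (X, w) from if_pos hc]
  · refine ⟨X, w, rfl, g, g', hg, hg', hagree, ?_⟩
    have h1 : (K.doInt dom val).eqs X w g = K.eqs X w g := if_neg hc
    have h2 : (K.doInt dom val).eqs X w g' = K.eqs X w g' := if_neg hc
    rw [h1, h2] at hne
    exact hne

lemma doInt_recursive (hK : K.Recursive) (dom val) :
    (K.doInt dom val).Recursive := fun p hp =>
  hK p (Relation.TransGen.mono (fun _ _ h => K.doInt_influences (dom := dom) (val := val) h) p p hp)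

lemma doInt_eqs_congr (dom) {val val'}
    (h : ∀ p ∈ dom, val p = val' p) (X : K.Endo) (w : K.World) (g) :
    (K.doInt dom val).eqs X w g = (K.doInt dom val').eqs X w g := by
  show (if (X, w) ∈ dom ∧ val (X, w) ∈ K.range (Sum.inr X) w then val (X, w)
      else K.eqs X w g) = (if (X, w) ∈ dom ∧ val' (X, w) ∈ K.range (Sum.inr X) w
        then val' (X, w) else K.eqs X w g)
  by_cases hm : (X, w) ∈ dom
  · rw [h _ hm]
  · simp [hm]

lemma doInt_solves_congr {dom val val'} {t v}
    (h : ∀ p ∈ dom, val p = val' p) :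
    (K.doInt dom val).Solves t v ↔ (K.doInt dom val').Solves t v := by
  constructor <;> rintro ⟨h1, h2⟩ <;> refine ⟨h1, fun X w => ?_⟩
  · exact (h2 X w).trans (K.doInt_eqs_congr dom h X w v)
  · exact (h2 X w).trans (K.doInt_eqs_congr dom h X w v).symm

lemma satE_doInt {dom val v} : ∀ (w : K.World) (α : Event K.Endo K.World K.Val),
    (K.doInt dom val).SatE v w α ↔ K.SatE v w α := by
  intro w α
  induction α generalizing w with
  | eq X x => exact Iff.rfl
  | eqAt X w'' x => exact Iff.rfl
  | neg α ih => exact not_congr (ih w)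
  | conj α β iha ihb => exact and_congr (iha w) (ihb w)
  | box α ih => exact forall_congr' fun w' => imp_congr Iff.rfl (ih w')

lemma satI_congr {dom val val'} {t w α}
    (h : ∀ p ∈ dom, val p = val' p) :
    K.SatI t dom val w α ↔ K.SatI t dom val' w α := by
  constructor <;> intro hs v hv
  · exact (K.satE_doInt (dom := dom) (val := val') w α).2
      ((K.satE_doInt (dom := dom) (val := val) w α).1
        (hs v ((K.doInt_solves_congr h).2 hv)))
  · exact (K.satE_doInt (dom := dom) (val := val) w α).2
      ((K.satE_doInt (dom := dom) (val := val') w α).1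
        (hs v ((K.doInt_solves_congr h).1 hv)))

end CKM

/-- If a primitive event `(X,w) = x` is part of a cause of an event `α`
in a recursive causal Kripke setting `(K,t)` at a world `w'` according to the MODIFIED HP
definition of actual causality, then `(X,w) = x` is part of a cause of `α` in `(K,t)` at
`w'` according to the UPDATED HP definition. -/
theorem partOfCause_modified_implies_updated (K : CKM) (hK : K.Recursive)
    (t : K.Exo → K.World → K.Val) (ht : K.ValidContext t)
    (w' : K.World) (X : K.Endo) (w : K.World) (x : K.Val)
    (α : Event K.Endo K.World K.Val)
    (h : K.PartOfCauseM t w' X w x α) :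
    K.PartOfCauseU t w' X w x α := by
  classical
  letI := K.endoFin; letI := K.worldFin
  obtain ⟨Y, y, ⟨hAC1, hAC2, hmin⟩, hXY, hyx⟩ := h
  obtain ⟨N, y', hy'r, hsatm⟩ := hAC2
  have hwf := K.recursive_wf hK
  obtain ⟨vs, hvs⟩ := K.exists_solves hK ht
  have huniq : ∀ v, K.Solves t v → v = vs := fun v hv => K.solves_unique hwf ht hv hvs
  set N₀ : Finset (K.Endo × K.World) := (Y ∪ N).erase (X, w) with hN₀def
  set n₀ : K.Endo × K.World → K.Val :=
    fun p => if p ∈ Y then y' p else vs (Sum.inr p.1, p.2) with hn₀def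
  have hXN₀ : (X, w) ∉ N₀ := Finset.notMem_erase _ _
  refine ⟨{(X, w)}, y, ⟨?_, ?_, ?_⟩, Finset.mem_singleton_self _, hyx⟩
  · -- AC1
    intro v hv
    refine ⟨(hAC1 v hv).1, ?_⟩
    intro p hp
    rw [Finset.mem_singleton] at hp
    subst hp
    exact (hAC1 v hv).2 _ hXY
  · -- AC2u
    refine ⟨N₀ᶜ, N₀, y', n₀, ?_, disjoint_compl_left, ?_, ?_, ?_, ?_, ?_⟩
    · simpa [Finset.singleton_subset_iff, Finset.mem_compl] using hXN₀
    · intro p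
      by_cases hp : p ∈ N₀
      · exact Or.inr hp
      · exact Or.inl (Finset.mem_compl.2 hp)
    · intro p hp
      rw [Finset.mem_singleton] at hp
      subst hp
      exact hy'r _ hXY
    · intro p hp
      by_cases hpY : p ∈ Y
      · simp only [hn₀def, if_pos hpY]; exact hy'r _ hpY
      · simp only [hn₀def, if_neg hpY]
        exact K.solves_mem ht hvs (Sum.inr p.1, p.2)
    · -- AC2a
      have hdom : ({(X, w)} : Finset (K.Endo × K.World)) ∪ N₀ = Y ∪ N := by
        ext p
        simp only [hN₀def, Finset.mem_union, Finset.mem_singleton, Finset.mem_erase]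
        constructor
        · rintro (rfl | ⟨-, hp⟩)
          · exact Or.inl hXY
          · exact hp
        · intro hp
          by_cases hpx : p = (X, w)
          · exact Or.inl hpx
          · exact Or.inr ⟨hpx, hp⟩
      have hval : (fun p => if p ∈ ({(X, w)} : Finset (K.Endo × K.World)) then y' p
          else n₀ p) = fun p => if p ∈ Y then y' p else vs (Sum.inr p.1, p.2) := by
        funext p
        by_cases hpx : p ∈ ({(X, w)} : Finset (K.Endo × K.World))
        · rw [Finset.mem_singleton] at hpx
          subst hpx
          simp [hXY]
        · simp only [if_neg hpx, hn₀def]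
      rw [hdom, hval]
      exact hsatm vs hvs
    · -- AC2b^u
      intro v hv Z' hZ' N' hN'
      rw [huniq v hv]
      set dom : Finset (K.Endo × K.World) := {(X, w)} ∪ N' ∪ Z' with hdomdef
      set val₁ : K.Endo × K.World → K.Val := fun p =>
        if p ∈ ({(X, w)} : Finset (K.Endo × K.World)) then y p
        else if p ∈ N' then n₀ p else vs (Sum.inr p.1, p.2) with hval₁def
      by_contra hcon
      unfold CKM.SatI at hcon
      push_neg at hcon
      obtain ⟨u, hu, hua⟩ := hcon
      set Y₁ : Finset (K.Endo × K.World) := N' ∩ Y with hY₁def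
      have hXnotN' : (X, w) ∉ N' := fun hmem => hXN₀ (hN' hmem)
      have hY₁sub : Y₁ ⊆ Y := Finset.inter_subset_right
      have hY₁ss : Y₁ ⊂ Y := (Finset.ssubset_iff_of_subset hY₁sub).2
        ⟨(X, w), hXY, fun hmem => hXnotN' (Finset.mem_inter.1 hmem).1⟩
      have hY₁dom : Y₁ ⊆ dom := fun p hp =>
        Finset.mem_union.2 (Or.inl (Finset.mem_union.2
          (Or.inr (Finset.mem_inter.1 hp).1)))
      -- the two intervention values agree on dom
      have hagree : ∀ p ∈ dom, (fun p => if p ∈ Y₁ then y' p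
          else vs (Sum.inr p.1, p.2)) p = val₁ p := by
        intro p hp
        simp only [hval₁def, hY₁def]
        by_cases hpx : p = (X, w)
        · subst hpx
          simp only [Finset.mem_inter, hXnotN', false_and, if_false,
            Finset.mem_singleton, if_pos rfl, if_true]
          exact ((hAC1 vs hvs).2 _ hXY)
        · have hpx' : p ∉ ({(X, w)} : Finset (K.Endo × K.World)) := by
            simpa [Finset.mem_singleton] using hpx
          simp only [if_neg hpx']
          by_cases hpN : p ∈ N'
          · simp [Finset.mem_inter, hpN, hn₀def]
          · simp only [Finset.mem_inter, hpN, false_and, if_false, if_neg hpN]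
      refine hmin Y₁ hY₁ss (fun p => vs (Sum.inr p.1, p.2)) ⟨?_, ?_⟩
      · -- AC1 for Y₁
        intro v₂ hv₂
        rw [huniq v₂ hv₂]
        exact ⟨(hAC1 vs hvs).1, fun p _ => rfl⟩
      · -- AC2m for Y₁
        refine ⟨dom \ Y₁, y', fun p hp => hy'r p (hY₁sub hp), ?_⟩
        intro v₂ hv₂
        rw [huniq v₂ hv₂, Finset.union_sdiff_of_subset hY₁dom]
        rw [K.satI_congr hagree]
        intro u₂ hu₂
        have hu₂' : u₂ = u := by
          refine (K.doInt dom val₁).solves_unique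
            ((K.doInt dom val₁).recursive_wf (K.doInt_recursive hK dom val₁))
            (fun U w => ht U w) hu₂ hu
        rw [hu₂']
        intro hSatE
        exact hua hSatE
  · -- AC3
    intro Y' hY' y'' hcontra
    obtain ⟨h1, h2⟩ := hcontra
    have hY'e : Y' = ∅ := Finset.ssubset_singleton_iff.1 hY'
    subst hY'e
    obtain ⟨Z₂, N₂, y₂, n₂, -, -, -, -, hn₂r, hneg, hpos⟩ := h2
    have hpos' := hpos vs hvs ∅ (Finset.empty_subset _) N₂ (Finset.Subset.refl _)
    simp only [Finset.empty_union, Finset.union_empty] at hneg hpos'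
    have hagree2 : ∀ p ∈ N₂, (fun p => if p ∈ (∅ : Finset (K.Endo × K.World))
        then y'' p else if p ∈ N₂ then n₂ p else vs (Sum.inr p.1, p.2)) p
        = (fun p => if p ∈ (∅ : Finset (K.Endo × K.World)) then y₂ p
          else n₂ p) p := by
      intro p hp
      simp [Finset.notMem_empty, hp]
    rw [K.satI_congr hagree2] at hpos'
    obtain ⟨u, hu⟩ := (K.doInt N₂ _).exists_solves
      (K.doInt_recursive hK _ _) (fun U w => ht U w)
    exact (hneg u hu) (hpos' u hu)
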